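/- For every n ≥ 4 there exists an n×n pairwise comparison matrix A and a modified matrix A′ obtained from A by changing a single off-diagonal entry a_ij (and its reciprocal a_ji) such that exactly one of the n − 2 triads containing the pair {i, j} has strictly larger φ-value in A′ than in A, while the other n − 3 triads containing {i, j} all have strictly smaller φ-value in A′ than in A (and all triads not containing {i, j} are unchanged). -/

import Mathlib

/-- A pairwise comparison matrix: positive entries with `a_ij * a_ji = 1`. -/
def IsPCM {n : ℕ} (A : Matrix (Fin n) (Fin n) ℝ) : Prop :=
  (∀ i j, 0 < A i j) ∧ (∀ i j, A i j * A j i = 1)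

/-- Local inconsistency of a triad `(x, y, z)`:
`φ(x, y, z) = min(|1 − z/(x·y)|, |1 − (x·y)/z|)`. -/
noncomputable def phi (x y z : ℝ) : ℝ :=
  min |1 - z / (x * y)| |1 - (x * y) / z|

/-- The `φ`-value of the triad indexed by a three-element subset `{i, j, k}`
(with `i < j < k`): `φ(a_ij, a_jk, a_ik)`. (Defaults to `0` on sets that are not
three-element.) -/
noncomputable def triadPhi {n : ℕ} (A : Matrix (Fin n) (Fin n) ℝ)
    (s : Finset (Fin n)) : ℝ :=
  match s.sort (· ≤ ·) with
  | [i, j, k] => phi (A i j) (A j k) (A i k)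
  | _ => 0

/- ---------------- auxiliary material ---------------- -/

lemma sort_three {n : ℕ} {i j k : Fin n} (h1 : i < j) (h2 : j < k) :
    ({i, j, k} : Finset (Fin n)).sort (· ≤ ·) = [i, j, k] := by
  have hnd : ([i, j, k] : List (Fin n)).Nodup := by
    simp [h1.ne, h2.ne, (h1.trans h2).ne]
  have hsorted : List.Pairwise (· ≤ ·) ([i, j, k] : List (Fin n)) := by
    refine List.pairwise_cons.2 ⟨?_, List.pairwise_cons.2 ⟨?_, List.pairwise_singleton _ _⟩⟩
    · rintro b hb
      rcases List.mem_pair.1 hb with rfl | rfl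
      · exact h1.le
      · exact (h1.trans h2).le
    · rintro b hb
      rw [List.mem_singleton] at hb; subst hb; exact h2.le
  apply List.Perm.eq_of_pairwise' (Finset.pairwise_sort _ _) hsorted
    (List.perm_of_nodup_nodup_toFinset_eq (Finset.sort_nodup _ _) hnd ?_)
  rw [Finset.sort_toFinset]
  simp

lemma triadPhi_eq_phi {n : ℕ} (A : Matrix (Fin n) (Fin n) ℝ) {i j k : Fin n}
    (h1 : i < j) (h2 : j < k) :
    triadPhi A {i, j, k} = phi (A i j) (A j k) (A i k) := by
  unfold triadPhi
  rw [sort_three h1 h2]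

/-- The base matrix. -/
noncomputable def Amat (m : ℕ) : Matrix (Fin (m+4)) (Fin (m+4)) ℝ := fun p q =>
  if p = 0 ∧ q = 1 then 2
  else if p = 1 ∧ q = 0 then 1/2
  else if p = 0 ∧ q = 2 then 4
  else if p = 2 ∧ q = 0 then 1/4
  else 1

/-- The modified matrix. -/
noncomputable def A'mat (m : ℕ) : Matrix (Fin (m+4)) (Fin (m+4)) ℝ := fun p q =>
  if (p = 0 ∧ q = 1) ∨ (p = 1 ∧ q = 0) then 1 else Amat m p q

lemma fin_ne01 (m : ℕ) : (0 : Fin (m+4)) ≠ 1 := by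
  simp [Fin.ext_iff]
lemma fin_ne02 (m : ℕ) : (0 : Fin (m+4)) ≠ 2 := by
  simp [Fin.ext_iff, Nat.mod_eq_of_lt (show 2 < m+4 by omega)]
lemma fin_ne12 (m : ℕ) : (1 : Fin (m+4)) ≠ 2 := by
  simp [Fin.ext_iff, Nat.mod_eq_of_lt (show 2 < m+4 by omega)]

lemma Amat_pcm (m : ℕ) : IsPCM (Amat m) := by
  have h01 := fin_ne01 m
  have h02 := fin_ne02 m
  have h12 := fin_ne12 m
  constructor
  · intro p q; unfold Amat; split_ifs <;> norm_num
  · intro p q; unfold Amat; split_ifs <;> simp_all <;> norm_num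

lemma A'mat_pcm (m : ℕ) : IsPCM (A'mat m) := by
  have h01 := fin_ne01 m
  have hA := Amat_pcm m
  constructor
  · intro p q; unfold A'mat; split_ifs with h
    · norm_num
    · exact hA.1 p q
  · intro p q; unfold A'mat; split_ifs with h h'
    · norm_num
    · exact absurd (by tauto : (q = 0 ∧ p = 1) ∨ (q = 1 ∧ p = 0)) h'
    · exact absurd (by tauto : (p = 0 ∧ q = 1) ∨ (p = 1 ∧ q = 0)) h
    · exact hA.2 p q

lemma A'mat_eq (m : ℕ) (p q : Fin (m+4)) (h : ¬(p = 0 ∧ q = 1)) (h' : ¬(p = 1 ∧ q = 0)) :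
    A'mat m p q = Amat m p q := by
  unfold A'mat
  rw [if_neg]
  tauto

/- ---------------- main theorem ---------------- -/

/-- For every `n ≥ 4` there is an `n × n` pairwise comparison matrix `A` and a matrix
`A′` obtained from `A` by changing the single off-diagonal entry `a_ij` (and its
reciprocal) such that exactly one of the `n − 2` triads containing the pair `{i, j}`
has strictly larger `φ`-value in `A′`, while the remaining `n − 3` such triads all have
strictly smaller `φ`-value, and all triads not containing `{i, j}` are unchanged. -/
theorem single_entry_change_worsens_one_triad_improves_rest (n : ℕ) (hn : 4 ≤ n) :
    ∃ (A A' : Matrix (Fin n) (Fin n) ℝ) (i j : Fin n),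
      IsPCM A ∧ IsPCM A' ∧ i ≠ j ∧
      A' i j ≠ A i j ∧
      (∀ p q : Fin n, ¬(p = i ∧ q = j) → ¬(p = j ∧ q = i) → A' p q = A p q) ∧
      (∃ k₀ : Fin n, k₀ ≠ i ∧ k₀ ≠ j ∧
        triadPhi A {i, j, k₀} < triadPhi A' {i, j, k₀} ∧
        ∀ k : Fin n, k ≠ i → k ≠ j → k ≠ k₀ →
          triadPhi A' {i, j, k} < triadPhi A {i, j, k}) ∧
      (∀ s : Finset (Fin n), s.card = 3 → ¬(i ∈ s ∧ j ∈ s) →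
        triadPhi A' s = triadPhi A s) := by
  obtain ⟨m, rfl⟩ : ∃ m, n = m + 4 := ⟨n - 4, by omega⟩
  have h01 := fin_ne01 m
  have h02 := fin_ne02 m
  have h12 := fin_ne12 m
  have lt01 : (0 : Fin (m+4)) < 1 := by simp [Fin.lt_def]
  have lt12 : (1 : Fin (m+4)) < 2 := by simp [Fin.lt_def, Nat.mod_eq_of_lt (show 2 < m+4 by omega)]
  -- entry values
  have a01 : Amat m 0 1 = 2 := by simp [Amat]
  have a12 : Amat m 1 2 = 1 := by simp [Amat, h12, h02.symm, Ne.symm h12]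
  have a02 : Amat m 0 2 = 4 := by simp [Amat, Ne.symm h12, h01]
  have a01' : A'mat m 0 1 = 1 := by simp [A'mat]
  refine ⟨Amat m, A'mat m, 0, 1, Amat_pcm m, A'mat_pcm m, h01, ?_, ?_, ⟨2, ?_, ?_, ?_, ?_⟩, ?_⟩
  · rw [a01, a01']; norm_num
  · exact fun p q h h' => A'mat_eq m p q h h'
  · exact Ne.symm h02
  · exact Ne.symm h12
  · -- worsened triad {0,1,2}
    rw [triadPhi_eq_phi _ lt01 lt12, triadPhi_eq_phi _ lt01 lt12]
    have b12 : A'mat m 1 2 = 1 := by rw [A'mat_eq m 1 2 (by simp [Ne.symm h01, Ne.symm h12]) (by simp [h02.symm, Ne.symm h12])]; exact a12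
    have b02 : A'mat m 0 2 = 1 * 4 := by
      rw [A'mat_eq m 0 2 (by simp [Ne.symm h12]) (by simp [h01.symm])]; rw [a02]; norm_num
    rw [a01, a12, a02, a01', b12, b02]
    norm_num [phi, abs_of_nonneg, abs_of_nonpos]
  · -- improved triads {0,1,k}, k ∉ {0,1,2}
    intro k hk0 hk1 hk2
    have lt1k : (1 : Fin (m+4)) < k := by
      rw [Fin.lt_def]
      have := Fin.val_ne_of_ne hk0
      have := Fin.val_ne_of_ne hk1
      simp only [Fin.val_zero, Fin.val_one] at *
      omega
    have a1k : Amat m 1 k = 1 := by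
      simp [Amat, Ne.symm h01, hk0, Ne.symm h12]
    have a0k : Amat m 0 k = 1 := by
      simp [Amat, hk1, hk2, h01, h02]
    have b1k : A'mat m 1 k = 1 := by
      rw [A'mat_eq m 1 k (by simp [Ne.symm h01]) (by simp [hk0]), a1k]
    have b0k : A'mat m 0 k = 1 := by
      rw [A'mat_eq m 0 k (by simp [hk1]) (by simp [h01.symm]), a0k]
    rw [triadPhi_eq_phi _ lt01 lt1k, triadPhi_eq_phi _ lt01 lt1k,
      a01, a1k, a0k, a01', b1k, b0k]
    norm_num [phi, abs_of_nonneg, abs_of_nonpos]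
  · -- triads not containing {0,1}
    intro s hcard hs
    have hlen : (s.sort (· ≤ ·)).length = 3 := by rw [Finset.length_sort]; exact hcard
    obtain ⟨a, b, c, hl⟩ := List.length_eq_three.1 hlen
    have hmem : ∀ x : Fin (m+4), x ∈ [a, b, c] → x ∈ s := by
      intro x hx
      rw [← hl] at hx
      exact (Finset.mem_sort _).1 hx
    have key : ∀ p q : Fin (m+4), p ∈ s → q ∈ s → A'mat m p q = Amat m p q := by
      intro p q hp hq
      refine A'mat_eq m p q ?_ ?_
      · rintro ⟨rfl, rfl⟩; exact hs ⟨hp, hq⟩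
      · rintro ⟨rfl, rfl⟩; exact hs ⟨hq, hp⟩
    have ha := hmem a (by simp)
    have hb := hmem b (by simp)
    have hc := hmem c (by simp)
    unfold triadPhi
    rw [hl]
    show phi (A'mat m a b) (A'mat m b c) (A'mat m a c)
      = phi (Amat m a b) (Amat m b c) (Amat m a c)
    rw [key a b ha hb, key b c hb hc, key a c ha hc]
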